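/- Let (X, ξ) be a pointed metric space that is proper (closed bounded sets are compact) and geodesic. Then there is a bijection between Ends(X), the set of ends of X, and ε(X,ξ), the set of ε-equivalence classes (sequential ends) of coarse sequences in (X, ξ). -/

import Mathlib

open Filter

/-- A coarse sequence in a pointed metric space `(X, ξ)`: a sequence with uniformly
bounded consecutive steps that diverges from `ξ` to infinity. -/
def IsCoarseSeqM {X : Type*} [PseudoMetricSpace X] (ξ : X) (s : ℕ → X) : Prop :=
  (∃ K : ℝ, ∀ i : ℕ, dist (s i) (s (i + 1)) ≤ K) ∧
  Tendsto (fun i => dist ξ (s i)) atTop atTop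

/-- `s` is a subsequence of `t`. -/
def IsSubseq {X : Type*} (s t : ℕ → X) : Prop :=
  ∃ k : ℕ → ℕ, StrictMono k ∧ ∀ i, s i = t (k i)

/-- σ-equivalence of coarse sequences: `s` and `t` are connected by a finite chain of
coarse sequences in which each consecutive pair is related by the subsequence relation. -/
def SigmaRelM {X : Type*} [PseudoMetricSpace X] (ξ : X) (s t : ℕ → X) : Prop :=
  ∃ (n : ℕ) (u : ℕ → ℕ → X), u 0 = s ∧ u n = t ∧ (∀ i ≤ n, IsCoarseSeqM ξ (u i)) ∧
    ∀ i < n, IsSubseq (u i) (u (i + 1)) ∨ IsSubseq (u (i + 1)) (u i)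

/-- `x` and `y` are connected inside `A` by a finite chain with steps of length `≤ K`. -/
def ChainM {X : Type*} [PseudoMetricSpace X] (K : ℝ) (A : Set X) (x y : X) : Prop :=
  ∃ (n : ℕ) (c : ℕ → X), c 0 = x ∧ c n = y ∧ (∀ i ≤ n, c i ∈ A) ∧
    ∀ i < n, dist (c i) (c (i + 1)) ≤ K

/-- ε-equivalence: there is `K > 0` such that for every `r > 0` there is `N` with the
tails `{s i : i ≥ N}` and `{t i : i ≥ N}` lying in the same `K`-connected component of
`X \ {x : dist ξ x ≤ r}`. -/
def EpsRelM {X : Type*} [PseudoMetricSpace X] (ξ : X) (s t : ℕ → X) : Prop :=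
  ∃ K > (0 : ℝ), ∀ r > (0 : ℝ), ∃ N : ℕ,
    ∀ x ∈ (s '' {i | N ≤ i}) ∪ (t '' {i | N ≤ i}),
    ∀ y ∈ (s '' {i | N ≤ i}) ∪ (t '' {i | N ≤ i}),
      ChainM K {z | r < dist ξ z} x y

/-- The set of coarse sequences in the pointed metric space `(X, ξ)`. -/
def CoarseSeqM {X : Type*} [PseudoMetricSpace X] (ξ : X) :=
  {s : ℕ → X // IsCoarseSeqM ξ s}

/-- `σ(X, ξ)`: the quotient of the set of coarse sequences by σ-equivalence. -/
def SigmaQuotM {X : Type*} [PseudoMetricSpace X] (ξ : X) :=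
  Quot (fun s t : CoarseSeqM ξ => SigmaRelM ξ s.1 t.1)

/-- `ε(X, ξ)`: the quotient of the set of coarse sequences by ε-equivalence. -/
def EpsQuotM {X : Type*} [PseudoMetricSpace X] (ξ : X) :=
  Quot (fun s t : CoarseSeqM ξ => EpsRelM ξ s.1 t.1)

open NNReal Topology

/-- A ray in a topological space: a proper continuous map `[0,∞) → X`. -/
def IsRay {X : Type*} [TopologicalSpace X] (r : ℝ≥0 → X) : Prop :=
  Continuous r ∧ ∀ K : Set X, IsCompact K → IsCompact (r ⁻¹' K)

/-- Two rays converge to the same end if for every compact `K ⊆ X` there is `N`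
such that `r₀([N,∞))` and `r₁([N,∞))` lie in the same path-connected component
of `X \ K`. -/
def SameEnd {X : Type*} [TopologicalSpace X] (r₀ r₁ : ℝ≥0 → X) : Prop :=
  ∀ K : Set X, IsCompact K → ∃ N : ℕ,
    ∀ x ∈ (r₀ '' {t : ℝ≥0 | (N : ℝ≥0) ≤ t}) ∪ (r₁ '' {t : ℝ≥0 | (N : ℝ≥0) ≤ t}),
    ∀ y ∈ (r₀ '' {t : ℝ≥0 | (N : ℝ≥0) ≤ t}) ∪ (r₁ '' {t : ℝ≥0 | (N : ℝ≥0) ≤ t}),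
      JoinedIn Kᶜ x y

/-- `Ends X`: the set of ends of `X`, i.e. rays modulo converging to the same end. -/
def Ends (X : Type*) [TopologicalSpace X] :=
  Quot (fun r₀ r₁ : {r : ℝ≥0 → X // IsRay r} => SameEnd r₀.1 r₁.1)

/-- A metric space is geodesic if any two points are joined by an isometric
embedding of the interval `[0, dist x y]`. -/
def IsGeodesicSpace (X : Type*) [MetricSpace X] : Prop :=
  ∀ x y : X, ∃ γ : ℝ → X, γ 0 = x ∧ γ (dist x y) = y ∧
    ∀ u ∈ Set.Icc 0 (dist x y), ∀ v ∈ Set.Icc 0 (dist x y),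
      dist (γ u) (γ v) = |u - v|

section ChainLemmas
variable {X : Type*} [MetricSpace X]

lemma ChainM.mono {K K' : ℝ} {A B : Set X} {x y : X} (h : ChainM K A x y)
    (hK : K ≤ K') (hAB : A ⊆ B) : ChainM K' B x y := by
  obtain ⟨n, c, h0, hn, hm, hs⟩ := h
  exact ⟨n, c, h0, hn, fun i hi => hAB (hm i hi), fun i hi => (hs i hi).trans hK⟩

lemma ChainM.refl {K : ℝ} {A : Set X} {x : X} (hx : x ∈ A) : ChainM K A x x :=
  ⟨0, fun _ => x, rfl, rfl, fun _ _ => hx, fun i hi => absurd hi (Nat.not_lt_zero i)⟩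

lemma ChainM.symm {K : ℝ} {A : Set X} {x y : X} (h : ChainM K A x y) : ChainM K A y x := by
  obtain ⟨n, c, h0, hn, hm, hs⟩ := h
  refine ⟨n, fun i => c (n - i), by simpa, by simpa, fun i _ => hm _ (Nat.sub_le n i),
    fun i hi => ?_⟩
  show dist (c (n - i)) (c (n - (i + 1))) ≤ K
  have h1 : n - i = (n - (i + 1)) + 1 := by omega
  rw [h1, dist_comm]
  exact hs _ (by omega)

lemma ChainM.trans {K : ℝ} {A : Set X} {x y z : X} (h1 : ChainM K A x y)
    (h2 : ChainM K A y z) : ChainM K A x z := by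
  obtain ⟨n, c, h0, hn, hm, hs⟩ := h1
  obtain ⟨n', c', h0', hn', hm', hs'⟩ := h2
  refine ⟨n + n', fun i => if i ≤ n then c i else c' (i - n), by simp [h0], ?_, ?_, ?_⟩
  · by_cases h : n + n' ≤ n
    · have h4 : n' = 0 := by omega
      subst h4
      simp [h, hn, ← hn', h0']
    · simp only [if_neg h]
      rw [Nat.add_sub_cancel_left]; exact hn'
  · intro i hi
    by_cases h : i ≤ n
    · simpa [h] using hm i h
    · simp only [if_neg h]
      exact hm' _ (by omega)
  · intro i hi
    by_cases h2 : i + 1 ≤ n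
    · simpa [h2, Nat.le_of_succ_le h2] using hs i (by omega)
    · by_cases h3 : i ≤ n
      · have : i = n := by omega
        subst this
        simp only [if_pos le_rfl, if_neg h2, Nat.add_sub_cancel_left, hn, ← h0']
        exact hs' 0 (by omega)
      · simp only [if_neg h3, if_neg h2]
        have e : i + 1 - n = (i - n) + 1 := by omega
        rw [e]
        exact hs' _ (by omega)

lemma chainM_single {K : ℝ} {A : Set X} {z w : X} (hz : z ∈ A) (hw : w ∈ A)
    (hd : dist z w ≤ K) : ChainM K A z w := by
  refine ⟨1, fun i => if i = 0 then z else w, by simp, by simp, ?_, ?_⟩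
  · intro i hi
    by_cases h : i = 0 <;> simp [h, hz, hw]
  · intro i hi
    have : i = 0 := by omega
    simp [this, hd]

lemma chainM_of_tail {K : ℝ} {A : Set X} {s : ℕ → X} {a b : ℕ} (hab : a ≤ b)
    (hm : ∀ k, a ≤ k → k ≤ b → s k ∈ A)
    (hs : ∀ k, a ≤ k → k < b → dist (s k) (s (k + 1)) ≤ K) :
    ChainM K A (s a) (s b) := by
  refine ⟨b - a, fun i => s (a + i), rfl, by simp only []; congr 1; omega,
    fun i hi => hm _ (by omega) (by omega), fun i hi => ?_⟩
  show dist (s (a + i)) (s (a + (i + 1))) ≤ K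
  have e : a + (i + 1) = a + i + 1 := by omega
  rw [e]
  exact hs _ (by omega) (by omega)

lemma chainM_of_isPreconnected {A : Set X} (hA : IsPreconnected A) {K : ℝ} (hK : 0 < K)
    {x y : X} (hx : x ∈ A) (hy : y ∈ A) : ChainM K A x y := by
  by_contra hxy
  set U : Set X := {z | ChainM K A x z} with hU
  have h1 : A ⊆ (⋃ z ∈ A ∩ U, Metric.ball z K) ∪ (⋃ z ∈ A \ U, Metric.ball z K) := by
    intro z hz
    by_cases h : z ∈ U
    · exact Or.inl (Set.mem_biUnion ⟨hz, h⟩ (Metric.mem_ball_self hK))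
    · exact Or.inr (Set.mem_biUnion ⟨hz, h⟩ (Metric.mem_ball_self hK))
  have h2 := hA _ _ (isOpen_biUnion fun _ _ => Metric.isOpen_ball)
    (isOpen_biUnion fun _ _ => Metric.isOpen_ball) h1
    ⟨x, hx, Set.mem_biUnion ⟨hx, ChainM.refl hx⟩ (Metric.mem_ball_self hK)⟩
    ⟨y, hy, Set.mem_biUnion ⟨hy, hxy⟩ (Metric.mem_ball_self hK)⟩
  obtain ⟨p, hpA, hp1, hp2⟩ := h2
  obtain ⟨z, hz, hpz⟩ := Set.mem_iUnion₂.1 hp1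
  obtain ⟨w, hw, hpw⟩ := Set.mem_iUnion₂.1 hp2
  have hpU : p ∈ U :=
    hz.2.trans (chainM_single hz.1 hpA (le_of_lt (Metric.mem_ball'.1 hpz)))
  have : w ∈ U :=
    hpU.trans (chainM_single hpA hw.1 (le_of_lt (Metric.mem_ball'.1 (Metric.mem_ball_comm.1 hpw))))
  exact hw.2 this

end ChainLemmas
section Geodesic
variable {X : Type*} [MetricSpace X]

noncomputable def geod (hgeo : IsGeodesicSpace X) (x y : X) : ℝ → X :=
  Classical.choose (hgeo x y)

lemma geod_zero (hgeo : IsGeodesicSpace X) (x y : X) : geod hgeo x y 0 = x :=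
  (Classical.choose_spec (hgeo x y)).1

lemma geod_last (hgeo : IsGeodesicSpace X) (x y : X) : geod hgeo x y (dist x y) = y :=
  (Classical.choose_spec (hgeo x y)).2.1

lemma geod_isom (hgeo : IsGeodesicSpace X) (x y : X) :
    ∀ u ∈ Set.Icc 0 (dist x y), ∀ v ∈ Set.Icc 0 (dist x y),
      dist (geod hgeo x y u) (geod hgeo x y v) = |u - v| :=
  (Classical.choose_spec (hgeo x y)).2.2

lemma geod_dist_left (hgeo : IsGeodesicSpace X) (x y : X) {u : ℝ}
    (hu : u ∈ Set.Icc 0 (dist x y)) : dist x (geod hgeo x y u) = u := by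
  have h := geod_isom hgeo x y 0 ⟨le_rfl, dist_nonneg⟩ u hu
  rw [geod_zero hgeo x y] at h
  rw [h, abs_sub_comm, sub_zero, abs_of_nonneg hu.1]

lemma geod_continuousOn (hgeo : IsGeodesicSpace X) (x y : X) :
    ContinuousOn (geod hgeo x y) (Set.Icc 0 (dist x y)) := by
  have : LipschitzOnWith 1 (geod hgeo x y) (Set.Icc 0 (dist x y)) := by
    apply LipschitzOnWith.of_dist_le_mul
    intro u hu v hv
    rw [geod_isom hgeo x y u hu v hv, NNReal.coe_one, one_mul, Real.dist_eq]
  exact this.continuousOn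

noncomputable def geodPath (hgeo : IsGeodesicSpace X) (x y : X) : Path x y where
  toFun t := geod hgeo x y (t * dist x y)
  continuous_toFun := by
    apply (geod_continuousOn hgeo x y).comp_continuous
      (continuous_subtype_val.mul continuous_const)
    intro t
    exact ⟨mul_nonneg t.2.1 dist_nonneg, mul_le_of_le_one_left dist_nonneg t.2.2⟩
  source' := by simp [geod_zero hgeo x y]
  target' := by simp [geod_last hgeo x y]

lemma geodPath_dist (hgeo : IsGeodesicSpace X) (x y : X) (t : unitInterval) :
    dist x (geodPath hgeo x y t) ≤ dist x y := by
  have : dist x (geodPath hgeo x y t) = ↑t * dist x y :=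
    geod_dist_left hgeo x y
      ⟨mul_nonneg t.2.1 dist_nonneg, mul_le_of_le_one_left dist_nonneg t.2.2⟩
  rw [this]
  exact mul_le_of_le_one_left dist_nonneg t.2.2

lemma joinedIn_of_chainM (hgeo : IsGeodesicSpace X) {ξ : X} {r K : ℝ} (hK : 0 ≤ K)
    {x y : X} (h : ChainM K {z | r < dist ξ z} x y) :
    JoinedIn {z | r - K < dist ξ z} x y := by
  obtain ⟨n, c, h0, hn, hm, hs⟩ := h
  subst h0; subst hn
  induction n with
  | zero =>
    exact JoinedIn.refl (show r - K < dist ξ (c 0) by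
      have := hm 0 le_rfl; simp only [Set.mem_setOf_eq] at this ⊢; linarith)
  | succ n ih =>
    have step : JoinedIn {z | r - K < dist ξ z} (c n) (c (n + 1)) := by
      refine ⟨geodPath hgeo (c n) (c (n + 1)), fun t => ?_⟩
      have hd : dist (c n) (geodPath hgeo (c n) (c (n + 1)) t) ≤ K :=
        (geodPath_dist hgeo _ _ t).trans (hs n (Nat.lt_succ_self n))
      have hcn : r < dist ξ (c n) := hm n (Nat.le_succ n)
      have htri := dist_triangle ξ (geodPath hgeo (c n) (c (n + 1)) t) (c n)
      simp only [Set.mem_setOf_eq]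
      have hcomm := dist_comm (c n) ((geodPath hgeo (c n) (c (n + 1))) t)
      linarith
    exact (ih (fun i hi => hm i (hi.trans (Nat.le_succ n)))
      (fun i hi => hs i (Nat.lt_succ_of_lt hi))).trans step

open NNReal in
lemma joinedIn_image_Icc {f : ℝ≥0 → X} (hf : Continuous f) {a b : ℝ≥0} (hab : a ≤ b) :
    JoinedIn (f '' Set.Icc a b) (f a) (f b) := by
  set g : unitInterval → ℝ≥0 := fun t => ⟨t.1, t.2.1⟩ with hg
  have hgcont : Continuous g := continuous_subtype_val.subtype_mk _
  have hg1 : ∀ t : unitInterval, g t ≤ 1 := by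
    intro t
    rw [← NNReal.coe_le_coe]
    exact t.2.2
  have hg0 : g 0 = 0 := by
    rw [← NNReal.coe_inj]
    rfl
  have hgone : g 1 = 1 := by
    rw [← NNReal.coe_inj]
    rfl
  have hmem : ∀ t : unitInterval, a + g t * (b - a) ∈ Set.Icc a b := by
    intro t
    refine ⟨le_self_add, ?_⟩
    calc a + g t * (b - a) ≤ a + 1 * (b - a) := by
          gcongr
          exact hg1 t
      _ = b := by rw [one_mul, add_tsub_cancel_of_le hab]
  refine ⟨⟨⟨fun t => f (a + g t * (b - a)), ?_⟩, ?_, ?_⟩, fun t => ?_⟩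
  · exact hf.comp (continuous_const.add (hgcont.mul continuous_const))
  · show f (a + g 0 * (b - a)) = f a
    rw [hg0, zero_mul, add_zero]
  · show f (a + g 1 * (b - a)) = f b
    rw [hgone, one_mul, add_tsub_cancel_of_le hab]
  · exact Set.mem_image_of_mem f (hmem t)

end Geodesic
section RayOfSeq
variable {X : Type*} [MetricSpace X]
open NNReal

noncomputable def rayFun (hgeo : IsGeodesicSpace X) (s : ℕ → X) : ℝ → X :=
  fun t => geod hgeo (s ⌊t⌋₊) (s (⌊t⌋₊ + 1))
    ((t - ⌊t⌋₊) * dist (s ⌊t⌋₊) (s (⌊t⌋₊ + 1)))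

lemma rayFun_arg_mem (s : ℕ → X) {t : ℝ} (ht : 0 ≤ t) :
    (t - ⌊t⌋₊) * dist (s ⌊t⌋₊) (s (⌊t⌋₊ + 1)) ∈
      Set.Icc 0 (dist (s ⌊t⌋₊) (s (⌊t⌋₊ + 1))) := by
  have h1 : (⌊t⌋₊ : ℝ) ≤ t := Nat.floor_le ht
  have h2 : t < ⌊t⌋₊ + 1 := Nat.lt_floor_add_one t
  constructor
  · exact mul_nonneg (by linarith) dist_nonneg
  · nth_rewrite 2 [← one_mul (dist (s ⌊t⌋₊) (s (⌊t⌋₊ + 1)))]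
    apply mul_le_mul_of_nonneg_right (by linarith) dist_nonneg

lemma rayFun_nat (hgeo : IsGeodesicSpace X) (s : ℕ → X) (n : ℕ) :
    rayFun hgeo s (n : ℝ) = s n := by
  unfold rayFun
  rw [Nat.floor_natCast]
  simp [geod_zero]

lemma rayFun_dist_floor (hgeo : IsGeodesicSpace X) (s : ℕ → X) {t : ℝ} (ht : 0 ≤ t) :
    dist (s ⌊t⌋₊) (rayFun hgeo s t) ≤ dist (s ⌊t⌋₊) (s (⌊t⌋₊ + 1)) := by
  unfold rayFun
  rw [geod_dist_left hgeo _ _ (rayFun_arg_mem s ht)]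
  exact (rayFun_arg_mem s ht).2

lemma rayFun_same_floor (hgeo : IsGeodesicSpace X) (s : ℕ → X) {Kb : ℝ}
    (hKb : ∀ i, dist (s i) (s (i + 1)) ≤ Kb) {t u : ℝ} (ht : 0 ≤ t) (htu : t ≤ u)
    (hfl : ⌊u⌋₊ = ⌊t⌋₊) : dist (rayFun hgeo s t) (rayFun hgeo s u) ≤ Kb * (u - t) := by
  have hu : 0 ≤ u := le_trans ht htu
  unfold rayFun
  rw [hfl]
  set d := dist (s ⌊t⌋₊) (s (⌊t⌋₊ + 1)) with hd
  have harg := rayFun_arg_mem s ht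
  have harg2 := rayFun_arg_mem s hu
  rw [hfl] at harg2
  rw [geod_isom hgeo _ _ _ harg _ harg2]
  have he : (t - ⌊t⌋₊) * d - (u - ⌊t⌋₊) * d = (t - u) * d := by ring
  rw [he, abs_mul, abs_of_nonpos (by linarith), abs_of_nonneg dist_nonneg]
  have : d ≤ Kb := hKb _
  nlinarith [dist_nonneg (x := s ⌊t⌋₊) (y := s (⌊t⌋₊ + 1))]

lemma rayFun_to_ceil (hgeo : IsGeodesicSpace X) (s : ℕ → X) {Kb : ℝ}
    (hKb : ∀ i, dist (s i) (s (i + 1)) ≤ Kb) {t : ℝ} (ht : 0 ≤ t) :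
    dist (rayFun hgeo s t) (s (⌊t⌋₊ + 1)) ≤ Kb * ((⌊t⌋₊ + 1) - t) := by
  have harg := rayFun_arg_mem s ht
  have h1 : (⌊t⌋₊ : ℝ) ≤ t := Nat.floor_le ht
  have h2 : t < ⌊t⌋₊ + 1 := Nat.lt_floor_add_one t
  have hiso := geod_isom hgeo (s ⌊t⌋₊) (s (⌊t⌋₊ + 1)) _ harg
    (dist (s ⌊t⌋₊) (s (⌊t⌋₊ + 1))) ⟨dist_nonneg, le_rfl⟩
  rw [geod_last hgeo] at hiso
  unfold rayFun
  rw [hiso]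
  have he : (t - ⌊t⌋₊) * dist (s ⌊t⌋₊) (s (⌊t⌋₊ + 1)) - dist (s ⌊t⌋₊) (s (⌊t⌋₊ + 1))
      = (t - (⌊t⌋₊ + 1)) * dist (s ⌊t⌋₊) (s (⌊t⌋₊ + 1)) := by ring
  rw [he, abs_mul, abs_of_nonpos (by linarith), abs_of_nonneg dist_nonneg]
  have : dist (s ⌊t⌋₊) (s (⌊t⌋₊ + 1)) ≤ Kb := hKb _
  nlinarith [dist_nonneg (x := s ⌊t⌋₊) (y := s (⌊t⌋₊ + 1))]

lemma rayFun_lip_aux (hgeo : IsGeodesicSpace X) (s : ℕ → X) {Kb : ℝ}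
    (hKb : ∀ i, dist (s i) (s (i + 1)) ≤ Kb) (hKb0 : 0 ≤ Kb) :
    ∀ n : ℕ, ∀ t u : ℝ, 0 ≤ t → t ≤ u → ⌊u⌋₊ ≤ ⌊t⌋₊ + n →
      dist (rayFun hgeo s t) (rayFun hgeo s u) ≤ Kb * (u - t) := by
  intro n
  induction n with
  | zero =>
    intro t u ht htu hfl
    exact rayFun_same_floor hgeo s hKb ht htu
      (le_antisymm (by omega) (Nat.floor_le_floor htu))
  | succ n ih =>
    intro t u ht htu hfl
    by_cases h : ⌊u⌋₊ ≤ ⌊t⌋₊ + n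
    · exact ih t u ht htu h
    · have hu : 0 ≤ u := le_trans ht htu
      have hup : (⌊t⌋₊ + 1 : ℕ) ≤ ⌊u⌋₊ := by omega
      have h5 : ((⌊t⌋₊ + 1 : ℕ) : ℝ) ≤ u := le_trans (Nat.cast_le.2 hup) (Nat.floor_le hu)
      set m : ℝ := ((⌊t⌋₊ + 1 : ℕ) : ℝ) with hm
      have hm0 : 0 ≤ m := Nat.cast_nonneg _
      have htm : t ≤ m := by
        rw [hm]
        push_cast
        exact le_of_lt (Nat.lt_floor_add_one t)
      have hfm : ⌊m⌋₊ = ⌊t⌋₊ + 1 := Nat.floor_natCast _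
      have d1 : dist (rayFun hgeo s t) (rayFun hgeo s m) ≤ Kb * (m - t) := by
        have : rayFun hgeo s m = s (⌊t⌋₊ + 1) := rayFun_nat hgeo s _
        rw [this]
        have := rayFun_to_ceil hgeo s hKb ht
        calc dist (rayFun hgeo s t) (s (⌊t⌋₊ + 1)) ≤ Kb * ((⌊t⌋₊ + 1) - t) := this
          _ = Kb * (m - t) := by rw [hm]; push_cast; ring
      have d2 : dist (rayFun hgeo s m) (rayFun hgeo s u) ≤ Kb * (u - m) :=
        ih m u hm0 h5 (by omega)
      calc dist (rayFun hgeo s t) (rayFun hgeo s u)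
          ≤ dist (rayFun hgeo s t) (rayFun hgeo s m)
            + dist (rayFun hgeo s m) (rayFun hgeo s u) := dist_triangle _ _ _
        _ ≤ Kb * (m - t) + Kb * (u - m) := add_le_add d1 d2
        _ = Kb * (u - t) := by ring

lemma rayFun_lip (hgeo : IsGeodesicSpace X) (s : ℕ → X) {Kb : ℝ}
    (hKb : ∀ i, dist (s i) (s (i + 1)) ≤ Kb) (hKb0 : 0 ≤ Kb) {t u : ℝ}
    (ht : 0 ≤ t) (htu : t ≤ u) :
    dist (rayFun hgeo s t) (rayFun hgeo s u) ≤ Kb * (u - t) :=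
  rayFun_lip_aux hgeo s hKb hKb0 ⌊u⌋₊ t u ht htu (by omega)

noncomputable def rayOf (hgeo : IsGeodesicSpace X) (s : ℕ → X) : ℝ≥0 → X :=
  fun t => rayFun hgeo s (t : ℝ)

lemma rayOf_lip (hgeo : IsGeodesicSpace X) (s : ℕ → X) {Kb : ℝ}
    (hKb : ∀ i, dist (s i) (s (i + 1)) ≤ Kb) (hKb0 : 0 ≤ Kb) (t u : ℝ≥0) :
    dist (rayOf hgeo s t) (rayOf hgeo s u) ≤ Kb * dist t u := by
  rcases le_total t u with h | h
  · have := rayFun_lip hgeo s hKb hKb0 t.2 (NNReal.coe_le_coe.2 h)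
    rwa [NNReal.dist_eq, abs_of_nonpos (by simp [h]), neg_sub]
  · have := rayFun_lip hgeo s hKb hKb0 u.2 (NNReal.coe_le_coe.2 h)
    rw [NNReal.dist_eq, abs_of_nonneg (by simp [h])]
    rwa [dist_comm]

lemma rayOf_continuous (hgeo : IsGeodesicSpace X) (s : ℕ → X) {Kb : ℝ}
    (hKb : ∀ i, dist (s i) (s (i + 1)) ≤ Kb) (hKb0 : 0 ≤ Kb) :
    Continuous (rayOf hgeo s) := by
  apply LipschitzWith.continuous (K := Real.toNNReal Kb)
  apply LipschitzWith.of_dist_le_mul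
  intro t u
  have := rayOf_lip hgeo s hKb hKb0 t u
  rwa [Real.coe_toNNReal _ hKb0]

lemma rayOf_nat (hgeo : IsGeodesicSpace X) (s : ℕ → X) (n : ℕ) :
    rayOf hgeo s (n : ℝ≥0) = s n := by
  unfold rayOf
  rw [NNReal.coe_natCast]
  exact rayFun_nat hgeo s n

lemma rayOf_dist_floor (hgeo : IsGeodesicSpace X) (s : ℕ → X) {Kb : ℝ}
    (hKb : ∀ i, dist (s i) (s (i + 1)) ≤ Kb) (t : ℝ≥0) :
    dist (s ⌊(t : ℝ)⌋₊) (rayOf hgeo s t) ≤ Kb :=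
  (rayFun_dist_floor hgeo s t.2).trans (hKb _)

lemma seq_escape {ξ : X} {s : ℕ → X} (htend : Tendsto (fun i => dist ξ (s i)) atTop atTop)
    (M : ℝ) : ∃ N : ℕ, ∀ i, N ≤ i → M < dist ξ (s i) := by
  obtain ⟨N, hN⟩ := Filter.eventually_atTop.1 (htend.eventually_gt_atTop M)
  exact ⟨N, fun i hi => hN i hi⟩

lemma rayOf_isRay (hproper : ∀ B : Set X, IsClosed B → Bornology.IsBounded B → IsCompact B)
    (hgeo : IsGeodesicSpace X) {ξ : X} {s : ℕ → X} {Kb : ℝ}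
    (hKb : ∀ i, dist (s i) (s (i + 1)) ≤ Kb) (hKb0 : 0 ≤ Kb)
    (htend : Tendsto (fun i => dist ξ (s i)) atTop atTop) :
    IsRay (rayOf hgeo s) := by
  refine ⟨rayOf_continuous hgeo s hKb hKb0, fun C hC => ?_⟩
  obtain ⟨M, hM⟩ := hC.isBounded.subset_closedBall ξ
  obtain ⟨N, hN⟩ := seq_escape htend (M + Kb)
  have hsub : rayOf hgeo s ⁻¹' C ⊆ Set.Icc 0 (N : ℝ≥0) := by
    intro t ht
    simp only [Set.mem_Icc]
    refine ⟨zero_le, ?_⟩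
    by_contra h
    push_neg at h
    have hfl : N ≤ ⌊(t : ℝ)⌋₊ := by
      have : (N : ℝ) ≤ t := by exact_mod_cast le_of_lt h
      exact Nat.le_floor this
    have h1 : M + Kb < dist ξ (s ⌊(t : ℝ)⌋₊) := hN _ hfl
    have h2 : dist (s ⌊(t : ℝ)⌋₊) (rayOf hgeo s t) ≤ Kb := rayOf_dist_floor hgeo s hKb t
    have h3 : dist (rayOf hgeo s t) ξ ≤ M := hM ht
    have htri := dist_triangle ξ (rayOf hgeo s t) (s ⌊(t : ℝ)⌋₊)
    rw [dist_comm _ ξ] at h3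
    have hcomm := dist_comm (s ⌊(t : ℝ)⌋₊) (rayOf hgeo s t)
    linarith
  exact (isCompact_Icc).of_isClosed_subset
    (hC.isClosed.preimage (rayOf_continuous hgeo s hKb hKb0)) hsub

end RayOfSeq
section SeqOfRay
variable {X : Type*} [MetricSpace X]
open NNReal

lemma ray_escape (hproper : ∀ B : Set X, IsClosed B → Bornology.IsBounded B → IsCompact B)
    {r : ℝ≥0 → X} (hr : IsRay r) (ξ : X) (M : ℝ) :
    ∃ T : ℕ, ∀ t : ℝ≥0, (T : ℝ≥0) ≤ t → M < dist ξ (r t) := by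
  have hC : IsCompact (Metric.closedBall ξ M) :=
    hproper _ Metric.isClosed_closedBall Metric.isBounded_closedBall
  have hK := hr.2 _ hC
  obtain ⟨c, hc⟩ := hK.bddAbove
  refine ⟨⌊c⌋₊ + 1, fun t ht => ?_⟩
  by_contra h
  push_neg at h
  have hmem : t ∈ r ⁻¹' Metric.closedBall ξ M := by
    simp only [Set.mem_preimage, Metric.mem_closedBall]
    rwa [dist_comm]
  have h2 : t ≤ c := hc hmem
  have h3 : c < ((⌊c⌋₊ + 1 : ℕ) : ℝ≥0) := by
    push_cast
    exact Nat.lt_floor_add_one c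
  exact absurd (ht.trans h2) (not_le.2 h3)

noncomputable def rayChain (r : ℝ≥0 → X) (hc : Continuous r) (n : ℕ) :
    {p : ℕ × (ℕ → X) // 1 ≤ p.1 ∧ p.2 0 = r (n : ℝ≥0) ∧ p.2 p.1 = r ((n + 1 : ℕ) : ℝ≥0) ∧
      (∀ i ≤ p.1, p.2 i ∈ r '' Set.Icc (n : ℝ≥0) ((n + 1 : ℕ) : ℝ≥0)) ∧
      ∀ i < p.1, dist (p.2 i) (p.2 (i + 1)) ≤ 1} := by
  apply Classical.choice
  have hle : (n : ℝ≥0) ≤ ((n + 1 : ℕ) : ℝ≥0) := Nat.cast_le.2 (Nat.le_succ n)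
  have hA : IsPreconnected (r '' Set.Icc (n : ℝ≥0) ((n + 1 : ℕ) : ℝ≥0)) :=
    (isPreconnected_Icc).image r hc.continuousOn
  have hx : r (n : ℝ≥0) ∈ r '' Set.Icc (n : ℝ≥0) ((n + 1 : ℕ) : ℝ≥0) :=
    Set.mem_image_of_mem r ⟨le_rfl, hle⟩
  have hy : r ((n + 1 : ℕ) : ℝ≥0) ∈ r '' Set.Icc (n : ℝ≥0) ((n + 1 : ℕ) : ℝ≥0) :=
    Set.mem_image_of_mem r ⟨hle, le_rfl⟩
  obtain ⟨m, c, h0, hm, hmem, hstep⟩ := chainM_of_isPreconnected hA one_pos hx hy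
  refine ⟨⟨(m + 1, fun i => c (i - 1)), Nat.le_add_left 1 m, h0, hm, ?_, ?_⟩⟩
  · intro i hi
    exact hmem _ (by omega)
  · intro i hi
    show dist (c (i - 1)) (c (i + 1 - 1)) ≤ 1
    rcases Nat.eq_zero_or_pos i with h | h
    · subst h
      simp
    · have e1 : i - 1 + 1 = i := by omega
      have := hstep (i - 1) (by omega)
      rw [e1] at this
      simpa [Nat.add_sub_cancel] using this

noncomputable def cumOf (r : ℝ≥0 → X) (hc : Continuous r) : ℕ → ℕ
  | 0 => 0
  | n + 1 => cumOf r hc n + (rayChain r hc n).1.1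

lemma cumOf_strictMono (r : ℝ≥0 → X) (hc : Continuous r) : StrictMono (cumOf r hc) := by
  apply strictMono_nat_of_lt_succ
  intro n
  have := (rayChain r hc n).2.1
  show cumOf r hc n < cumOf r hc n + (rayChain r hc n).1.1
  omega

lemma cumOf_le_self (r : ℝ≥0 → X) (hc : Continuous r) (n : ℕ) : n ≤ cumOf r hc n :=
  (cumOf_strictMono r hc).le_apply

noncomputable def idxOf (r : ℝ≥0 → X) (hc : Continuous r) (i : ℕ) : ℕ :=
  Nat.findGreatest (fun n => cumOf r hc n ≤ i) i

lemma idxOf_le (r : ℝ≥0 → X) (hc : Continuous r) (i : ℕ) :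
    cumOf r hc (idxOf r hc i) ≤ i := by
  classical
  exact Nat.findGreatest_spec (P := fun n => cumOf r hc n ≤ i) (Nat.zero_le i)
    (by simp [cumOf])

lemma idxOf_ge (r : ℝ≥0 → X) (hc : Continuous r) {n i : ℕ} (h : cumOf r hc n ≤ i) :
    n ≤ idxOf r hc i := by
  classical
  exact Nat.le_findGreatest (P := fun n => cumOf r hc n ≤ i)
    ((cumOf_le_self r hc n).trans h) h

lemma idxOf_lt (r : ℝ≥0 → X) (hc : Continuous r) (i : ℕ) :
    i < cumOf r hc (idxOf r hc i + 1) := by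
  by_contra h
  push_neg at h
  have := idxOf_ge r hc h
  omega

lemma idxOf_eq (r : ℝ≥0 → X) (hc : Continuous r) {n i : ℕ} (h1 : cumOf r hc n ≤ i)
    (h2 : i < cumOf r hc (n + 1)) : idxOf r hc i = n := by
  have hge := idxOf_ge r hc h1
  have hlt : cumOf r hc (idxOf r hc i) < cumOf r hc (n + 1) :=
    lt_of_le_of_lt (idxOf_le r hc i) h2
  have := (cumOf_strictMono r hc).lt_iff_lt.1 hlt
  omega

noncomputable def seqOf (r : ℝ≥0 → X) (hc : Continuous r) (i : ℕ) : X :=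
  (rayChain r hc (idxOf r hc i)).1.2 (i - cumOf r hc (idxOf r hc i))

lemma seqOf_cum (r : ℝ≥0 → X) (hc : Continuous r) (n : ℕ) :
    seqOf r hc (cumOf r hc n) = r (n : ℝ≥0) := by
  unfold seqOf
  rw [idxOf_eq r hc le_rfl ((cumOf_strictMono r hc) (Nat.lt_succ_self n)), Nat.sub_self]
  exact (rayChain r hc n).2.2.1

lemma seqOf_mem (r : ℝ≥0 → X) (hc : Continuous r) (i : ℕ) :
    seqOf r hc i ∈ r '' Set.Icc ((idxOf r hc i : ℕ) : ℝ≥0) ((idxOf r hc i + 1 : ℕ) : ℝ≥0) := by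
  apply (rayChain r hc (idxOf r hc i)).2.2.2.2.1
  have h1 := idxOf_le r hc i
  have h2 := idxOf_lt r hc i
  have : cumOf r hc (idxOf r hc i + 1)
      = cumOf r hc (idxOf r hc i) + (rayChain r hc (idxOf r hc i)).1.1 := rfl
  omega

lemma seqOf_step (r : ℝ≥0 → X) (hc : Continuous r) (i : ℕ) :
    dist (seqOf r hc i) (seqOf r hc (i + 1)) ≤ 1 := by
  have h1 := idxOf_le r hc i
  have h2 := idxOf_lt r hc i
  have hcum : cumOf r hc (idxOf r hc i + 1)
      = cumOf r hc (idxOf r hc i) + (rayChain r hc (idxOf r hc i)).1.1 := rfl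
  by_cases h : i + 1 < cumOf r hc (idxOf r hc i + 1)
  · have he : idxOf r hc (i + 1) = idxOf r hc i := idxOf_eq r hc (by omega) h
    unfold seqOf
    rw [he]
    have e : i + 1 - cumOf r hc (idxOf r hc i) = (i - cumOf r hc (idxOf r hc i)) + 1 := by
      omega
    rw [e]
    exact (rayChain r hc (idxOf r hc i)).2.2.2.2.2 _ (by omega)
  · have heq : i + 1 = cumOf r hc (idxOf r hc i + 1) := by omega
    have e2 : seqOf r hc (i + 1) = (rayChain r hc (idxOf r hc i)).1.2
        (rayChain r hc (idxOf r hc i)).1.1 := by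
      rw [heq, seqOf_cum r hc]
      exact ((rayChain r hc (idxOf r hc i)).2.2.2.1).symm
    have hm1 := (rayChain r hc (idxOf r hc i)).2.1
    have e3 : i - cumOf r hc (idxOf r hc i) = (rayChain r hc (idxOf r hc i)).1.1 - 1 := by
      omega
    have e4 : (rayChain r hc (idxOf r hc i)).1.1 - 1 + 1
        = (rayChain r hc (idxOf r hc i)).1.1 := by omega
    have := (rayChain r hc (idxOf r hc i)).2.2.2.2.2 ((rayChain r hc (idxOf r hc i)).1.1 - 1)
      (by omega)
    rw [e4] at this
    show dist ((rayChain r hc (idxOf r hc i)).1.2 (i - cumOf r hc (idxOf r hc i)))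
      (seqOf r hc (i + 1)) ≤ 1
    rw [e3, e2]
    exact this

lemma seqOf_coarse (hproper : ∀ B : Set X, IsClosed B → Bornology.IsBounded B → IsCompact B)
    {r : ℝ≥0 → X} (hr : IsRay r) (ξ : X) :
    IsCoarseSeqM ξ (seqOf r hr.1) := by
  refine ⟨⟨1, seqOf_step r hr.1⟩, ?_⟩
  rw [Filter.tendsto_atTop]
  intro b
  obtain ⟨T, hT⟩ := ray_escape hproper hr ξ b
  rw [Filter.eventually_atTop]
  refine ⟨cumOf r hr.1 T, fun i hi => ?_⟩
  obtain ⟨t, ht, hrt⟩ := seqOf_mem r hr.1 i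
  have hTi : T ≤ idxOf r hr.1 i := idxOf_ge r hr.1 hi
  have : (T : ℝ≥0) ≤ t := le_trans (Nat.cast_le.2 hTi) ht.1
  rw [← hrt]
  exact le_of_lt (hT t this)

end SeqOfRay
section Helpers
variable {X : Type*} [MetricSpace X]
open NNReal

lemma chainM_of_joinedIn {F G : Set X} {x y : X} (h : JoinedIn F x y) {K : ℝ} (hK : 0 < K)
    (hFG : F ⊆ G) : ChainM K G x y := by
  obtain ⟨p, hp⟩ := h
  have hpre : IsPreconnected (Set.range p) := isPreconnected_range p.continuous
  have hchain := chainM_of_isPreconnected hpre hK ⟨0, p.source⟩ ⟨1, p.target⟩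
  apply hchain.mono le_rfl
  rintro _ ⟨t, rfl⟩
  exact hFG (hp t)

noncomputable def stepBound {ξ : X} (s : CoarseSeqM ξ) : ℝ :=
  max (Classical.choose s.2.1) 0

lemma stepBound_nonneg {ξ : X} (s : CoarseSeqM ξ) : 0 ≤ stepBound s := le_max_right _ _

lemma stepBound_spec {ξ : X} (s : CoarseSeqM ξ) (i : ℕ) :
    dist (s.1 i) (s.1 (i + 1)) ≤ stepBound s :=
  (Classical.choose_spec s.2.1 i).trans (le_max_left _ _)

lemma ray_tail_joined (hgeo : IsGeodesicSpace X) {ξ : X} (u : ℕ → X) {Ku : ℝ}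
    (hKu : ∀ i, dist (u i) (u (i + 1)) ≤ Ku) (hKu0 : 0 ≤ Ku) {N : ℕ} {ρ : ℝ}
    (hdiv : ∀ i, N ≤ i → ρ + Ku < dist ξ (u i)) {θ : ℝ≥0} (hθ : (N : ℝ≥0) ≤ θ) :
    JoinedIn {z | ρ < dist ξ z} (rayOf hgeo u θ) (u N) := by
  have hcont := rayOf_continuous hgeo u hKu hKu0
  have himg := joinedIn_image_Icc hcont hθ
  rw [rayOf_nat hgeo u N] at himg
  apply JoinedIn.symm
  apply himg.mono
  rintro _ ⟨τ, hτ, rfl⟩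
  have hfl : N ≤ ⌊(τ : ℝ)⌋₊ := by
    apply Nat.le_floor
    rw [← NNReal.coe_natCast]
    exact_mod_cast hτ.1
  have h1 : ρ + Ku < dist ξ (u ⌊(τ : ℝ)⌋₊) := hdiv _ hfl
  have h2 : dist (u ⌊(τ : ℝ)⌋₊) (rayOf hgeo u τ) ≤ Ku := rayOf_dist_floor hgeo u hKu τ
  have htri := dist_triangle ξ (rayOf hgeo u τ) (u ⌊(τ : ℝ)⌋₊)
  have hcomm := dist_comm (u ⌊(τ : ℝ)⌋₊) (rayOf hgeo u τ)
  simp only [Set.mem_setOf_eq]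
  linarith

lemma ball_compl_subset {ξ : X} {ρ : ℝ} {C : Set X} (hρC : C ⊆ Metric.closedBall ξ ρ) :
    {z | |ρ| < dist ξ z} ⊆ Cᶜ := by
  intro z hz hzC
  have := hρC hzC
  rw [Metric.mem_closedBall, dist_comm] at this
  simp only [Set.mem_setOf_eq] at hz
  have : ρ ≤ |ρ| := le_abs_self ρ
  linarith [hρC hzC, (Metric.mem_closedBall.1 (hρC hzC))]

end Helpers
section Main
variable {X : Type*} [MetricSpace X]
open NNReal

lemma sameEnd_to_epsRel
    (hproper : ∀ B : Set X, IsClosed B → Bornology.IsBounded B → IsCompact B)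
    {ξ : X} (r₀ r₁ : {r : ℝ≥0 → X // IsRay r}) (h : SameEnd r₀.1 r₁.1) :
    EpsRelM ξ (seqOf r₀.1 r₀.2.1) (seqOf r₁.1 r₁.2.1) := by
  refine ⟨1, one_pos, fun ρ hρ => ?_⟩
  have hC : IsCompact (Metric.closedBall ξ ρ) :=
    hproper _ Metric.isClosed_closedBall Metric.isBounded_closedBall
  obtain ⟨N, hN⟩ := h _ hC
  set N' := max (cumOf r₀.1 r₀.2.1 N) (cumOf r₁.1 r₁.2.1 N) with hN'
  refine ⟨N', ?_⟩
  have key : ∀ x, x ∈ (seqOf r₀.1 r₀.2.1 '' {i | N' ≤ i}) ∪ (seqOf r₁.1 r₁.2.1 '' {i | N' ≤ i}) →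
      x ∈ (r₀.1 '' {t : ℝ≥0 | (N : ℝ≥0) ≤ t}) ∪ (r₁.1 '' {t : ℝ≥0 | (N : ℝ≥0) ≤ t}) := by
    rintro x (⟨i, hi, rfl⟩ | ⟨i, hi, rfl⟩)
    · obtain ⟨τ, hτ, hrt⟩ := seqOf_mem r₀.1 r₀.2.1 i
      refine Or.inl ⟨τ, ?_, hrt⟩
      have hNi : N ≤ idxOf r₀.1 r₀.2.1 i :=
        idxOf_ge r₀.1 r₀.2.1 (le_trans (le_max_left _ _) hi)
      exact le_trans (Nat.cast_le.2 hNi) hτ.1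
    · obtain ⟨τ, hτ, hrt⟩ := seqOf_mem r₁.1 r₁.2.1 i
      refine Or.inr ⟨τ, ?_, hrt⟩
      have hNi : N ≤ idxOf r₁.1 r₁.2.1 i :=
        idxOf_ge r₁.1 r₁.2.1 (le_trans (le_max_right _ _) hi)
      exact le_trans (Nat.cast_le.2 hNi) hτ.1
  intro x hx y hy
  have hj := hN x (key x hx) y (key y hy)
  apply chainM_of_joinedIn hj one_pos
  intro z hz
  simp only [Set.mem_compl_iff, Metric.mem_closedBall, not_le] at hz
  simp only [Set.mem_setOf_eq]
  rwa [dist_comm]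

lemma epsRel_to_sameEnd (hgeo : IsGeodesicSpace X) {ξ : X} (s t : CoarseSeqM ξ)
    (h : EpsRelM ξ s.1 t.1) :
    SameEnd (rayOf hgeo s.1) (rayOf hgeo t.1) := by
  obtain ⟨K, hK0, hKp⟩ := h
  intro C hC
  obtain ⟨ρ, hρC⟩ := hC.isBounded.subset_closedBall ξ
  have hKs0 := stepBound_nonneg s
  have hKt0 := stepBound_nonneg t
  have habs := abs_nonneg ρ
  set Ks := stepBound s
  set Kt := stepBound t
  set r₁ := |ρ| + Ks + Kt + K + 1 with hr₁
  have hr₁pos : 0 < r₁ := by linarith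
  obtain ⟨N₁, hN₁⟩ := hKp r₁ hr₁pos
  obtain ⟨N₂, hN₂⟩ := seq_escape s.2.2 r₁
  obtain ⟨N₃, hN₃⟩ := seq_escape t.2.2 r₁
  set N := max N₁ (max N₂ N₃) with hNdef
  refine ⟨N, ?_⟩
  set B := {z : X | |ρ| < dist ξ z} with hB
  have hBC : B ⊆ Cᶜ := ball_compl_subset hρC
  have hst : JoinedIn B (s.1 N) (t.1 N) := by
    have hchain := hN₁ (s.1 N) (Or.inl ⟨N, (show N ∈ {i | N₁ ≤ i} from le_max_left N₁ (max N₂ N₃)), rfl⟩)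
      (t.1 N) (Or.inr ⟨N, (show N ∈ {i | N₁ ≤ i} from le_max_left N₁ (max N₂ N₃)), rfl⟩)
    have hj := joinedIn_of_chainM hgeo (le_of_lt hK0) hchain
    apply hj.mono
    intro z hz
    simp only [Set.mem_setOf_eq] at hz
    simp only [hB, Set.mem_setOf_eq]
    linarith
  have hsdiv : ∀ i, N ≤ i → |ρ| + Ks < dist ξ (s.1 i) := by
    intro i hi
    have := hN₂ i (le_trans (le_trans (le_max_left _ _) (le_max_right N₁ _)) hi)
    linarith
  have htdiv : ∀ i, N ≤ i → |ρ| + Kt < dist ξ (t.1 i) := by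
    intro i hi
    have := hN₃ i (le_trans (le_trans (le_max_right _ _) (le_max_right N₁ _)) hi)
    linarith
  have hanchor : ∀ x, x ∈ (rayOf hgeo s.1 '' {θ : ℝ≥0 | (N : ℝ≥0) ≤ θ}) ∪
      (rayOf hgeo t.1 '' {θ : ℝ≥0 | (N : ℝ≥0) ≤ θ}) → JoinedIn B x (s.1 N) := by
    rintro x (⟨θ, hθ, rfl⟩ | ⟨θ, hθ, rfl⟩)
    · exact ray_tail_joined hgeo s.1 (stepBound_spec s) hKs0 hsdiv hθ
    · exact (ray_tail_joined hgeo t.1 (stepBound_spec t) hKt0 htdiv hθ).trans hst.symm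
  intro x hx y hy
  exact (((hanchor x hx).trans (hanchor y hy).symm).mono hBC)

lemma sameEnd_roundtrip
    (hproper : ∀ B : Set X, IsClosed B → Bornology.IsBounded B → IsCompact B)
    (hgeo : IsGeodesicSpace X) (ξ : X) (r : {r : ℝ≥0 → X // IsRay r}) :
    SameEnd r.1 (rayOf hgeo (seqOf r.1 r.2.1)) := by
  set s := seqOf r.1 r.2.1 with hs
  have hs1 : ∀ i, dist (s i) (s (i + 1)) ≤ 1 := seqOf_step r.1 r.2.1
  intro C hC
  obtain ⟨ρ, hρC⟩ := hC.isBounded.subset_closedBall ξ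
  obtain ⟨T, hT⟩ := ray_escape hproper r.2 ξ (|ρ| + 2)
  set N := cumOf r.1 r.2.1 T with hNdef
  refine ⟨N, ?_⟩
  set B := {z : X | |ρ| < dist ξ z} with hB
  have hBC : B ⊆ Cᶜ := ball_compl_subset hρC
  have hTN : T ≤ N := cumOf_le_self r.1 r.2.1 T
  have hsdiv : ∀ i, N ≤ i → (|ρ| + 1) + 1 < dist ξ (s i) := by
    intro i hi
    obtain ⟨τ, hτ, hrt⟩ := seqOf_mem r.1 r.2.1 i
    have hTi : T ≤ idxOf r.1 r.2.1 i := idxOf_ge r.1 r.2.1 hi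
    have hτT : (T : ℝ≥0) ≤ τ := le_trans (Nat.cast_le.2 hTi) hτ.1
    rw [hs, ← hrt]
    have := hT τ hτT
    linarith
  have hanchor_r : ∀ θ : ℝ≥0, (N : ℝ≥0) ≤ θ → JoinedIn B (r.1 θ) (r.1 (T : ℝ≥0)) := by
    intro θ hθ
    have hTθ : (T : ℝ≥0) ≤ θ := le_trans (Nat.cast_le.2 hTN) hθ
    have himg := joinedIn_image_Icc r.2.1 hTθ
    apply JoinedIn.symm
    apply himg.mono
    rintro _ ⟨τ, hτ, rfl⟩
    have := hT τ hτ.1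
    simp only [hB, Set.mem_setOf_eq]
    linarith
  have hanchor : ∀ x, x ∈ (r.1 '' {θ : ℝ≥0 | (N : ℝ≥0) ≤ θ}) ∪
      (rayOf hgeo s '' {θ : ℝ≥0 | (N : ℝ≥0) ≤ θ}) → JoinedIn B x (r.1 (T : ℝ≥0)) := by
    rintro x (⟨θ, hθ, rfl⟩ | ⟨θ, hθ, rfl⟩)
    · exact hanchor_r θ hθ
    · have hj := ray_tail_joined hgeo s hs1 zero_le_one (N := N) (ρ := |ρ| + 1) hsdiv hθ
      have hsN : s N = r.1 (T : ℝ≥0) := seqOf_cum r.1 r.2.1 T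
      rw [hsN] at hj
      apply hj.mono
      intro z hz
      simp only [Set.mem_setOf_eq, hB] at hz ⊢
      linarith
  intro x hx y hy
  exact (((hanchor x hx).trans (hanchor y hy).symm).mono hBC)

lemma epsRel_roundtrip (hgeo : IsGeodesicSpace X) {ξ : X} (s : CoarseSeqM ξ)
    (hc : Continuous (rayOf hgeo s.1)) :
    EpsRelM ξ s.1 (seqOf (rayOf hgeo s.1) hc) := by
  have hKs0 := stepBound_nonneg s
  set Ks := stepBound s with hKs
  set R := rayOf hgeo s.1 with hR
  set s' := seqOf R hc with hs'
  refine ⟨Ks + 1, by linarith, fun ρ hρ => ?_⟩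
  obtain ⟨M, hM⟩ := seq_escape s.2.2 (ρ + Ks)
  set N := max (cumOf R hc M) M with hNdef
  set A := {z : X | ρ < dist ξ z} with hA
  refine ⟨N, ?_⟩
  have hMN : M ≤ N := le_max_right _ _
  have hmemS : ∀ i, M ≤ i → s.1 i ∈ A := by
    intro i hi
    simp only [hA, Set.mem_setOf_eq]
    linarith [hM i hi]
  have hchainS : ∀ a b : ℕ, M ≤ a → a ≤ b → ChainM (Ks + 1) A (s.1 a) (s.1 b) := by
    intro a b ha hab
    exact chainM_of_tail hab (fun k hk _ => hmemS k (ha.trans hk))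
      (fun k _ _ => (stepBound_spec s k).trans (by linarith))
  have hanchor : ∀ x, x ∈ (s.1 '' {i | N ≤ i}) ∪ (s' '' {i | N ≤ i}) →
      ChainM (Ks + 1) A x (s.1 N) := by
    rintro x (⟨i, hi, rfl⟩ | ⟨i, hi, rfl⟩)
    · exact (hchainS N i (hMN) hi).symm
    · obtain ⟨τ, hτ, hrt⟩ := seqOf_mem R hc i
      have hMi : M ≤ idxOf R hc i := idxOf_ge R hc (le_trans (le_max_left _ _) hi)
      have hMj : M ≤ ⌊(τ : ℝ)⌋₊ := by
        apply le_trans hMi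
        apply Nat.le_floor
        have := hτ.1
        rw [← NNReal.coe_le_coe] at this
        simpa using this
      have hd : dist (s.1 ⌊(τ : ℝ)⌋₊) (s' i) ≤ Ks := by
        rw [hs', ← hrt]
        exact rayOf_dist_floor hgeo s.1 (stepBound_spec s) τ
      have hs'A : s' i ∈ A := by
        simp only [hA, Set.mem_setOf_eq]
        have h1 := hM _ hMj
        have htri := dist_triangle ξ (s' i) (s.1 ⌊(τ : ℝ)⌋₊)
        have hcomm := dist_comm (s.1 ⌊(τ : ℝ)⌋₊) (s' i)
        linarith
      have hstep1 : ChainM (Ks + 1) A (s' i) (s.1 ⌊(τ : ℝ)⌋₊) :=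
        chainM_single hs'A (hmemS _ hMj) (by rw [dist_comm]; linarith)
      rcases le_total N ⌊(τ : ℝ)⌋₊ with hcase | hcase
      · exact hstep1.trans (hchainS N _ hMN hcase).symm
      · exact hstep1.trans (hchainS _ N hMj hcase)
  intro x hx y hy
  exact (hanchor x hx).trans (hanchor y hy).symm

end Main

/-- for a proper geodesic pointed metric space `(X, ξ)`, there is a
bijection between `Ends X` and the set `ε(X, ξ)` of sequential ends. -/
theorem ends_equiv_epsQuot {X : Type*} [MetricSpace X]
    (hproper : ∀ B : Set X, IsClosed B → Bornology.IsBounded B → IsCompact B)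
    (hgeo : IsGeodesicSpace X) (ξ : X) :
    Nonempty (Ends X ≃ EpsQuotM ξ) := by
  let F : {r : ℝ≥0 → X // IsRay r} → CoarseSeqM ξ :=
    fun r => ⟨seqOf r.1 r.2.1, seqOf_coarse hproper r.2 ξ⟩
  let G : CoarseSeqM ξ → {r : ℝ≥0 → X // IsRay r} :=
    fun s => ⟨rayOf hgeo s.1,
      rayOf_isRay hproper hgeo (stepBound_spec s) (stepBound_nonneg s) s.2.2⟩
  refine ⟨⟨Quot.lift (fun r => Quot.mk _ (F r))
      (fun a b hab => Quot.sound (sameEnd_to_epsRel hproper a b hab)),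
    Quot.lift (fun s => Quot.mk _ (G s))
      (fun a b hab => Quot.sound (epsRel_to_sameEnd hgeo a b hab)), ?_, ?_⟩⟩
  · intro q
    induction q using Quot.ind with
    | _ r =>
      exact (Quot.sound (r := fun r₀ r₁ : {p : ℝ≥0 → X // IsRay p} => SameEnd r₀.1 r₁.1)
        (a := r) (b := G (F r)) (sameEnd_roundtrip hproper hgeo ξ r)).symm
  · intro q
    induction q using Quot.ind with
    | _ s =>
      exact (Quot.sound (r := fun a b : CoarseSeqM ξ => EpsRelM ξ a.1 b.1)
        (a := s) (b := F (G s)) (epsRel_roundtrip hgeo s (G s).2.1)).symm
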